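/- (Exact second-moment identities from Lemma 1, entries involving û₃.) Under the noisy network model with three independent replicates, set û₁ = N^{-1} Σ_{i<j} Y_{i,j}, û₂ = (2N)^{-1} Σ_{i<j} |Y_{i,j,*} − Y_{i,j}|, û₃ = (3N)^{-1} Σ_{i<j} I( Y_{i,j,**} − 2Y_{i,j,*} + Y_{i,j} ∈ {1,−2} ), u_k = E(û_k) for k = 1,2,3, κ₁ = α(1−α), κ₂ = β(1−β). Then N·E{(û₃−u₃)²} = δβκ₂(1/3 − βκ₂) + (1−δ)κ₁(1−α){1/3 − κ₁(1−α)}, N·E{(û₁−u₁)(û₃−u₃)} = δκ₂(β²/3 − 2κ₂/3) + (1−δ)κ₁{(1−α)²/3 − 2κ₁/3}, and N·E{(û₂−u₂)(û₃−u₃)} = δβκ₂(1/3 − κ₂) + (1−δ)(1−α)κ₁(1/3 − κ₁). -/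

import Mathlib

open MeasureTheory ProbabilityTheory Finset

/-- Index set of unordered vertex pairs, encoded as ordered pairs `(i, j)` with `i < j`. -/
abbrev EdgeIdx (p : ℕ) := {q : Fin p × Fin p // q.1 < q.2}

/-- The Bernoulli mass function on `{0,1}`: mass `q` at `1` and `1 − q` at `0`. -/
noncomputable def bernMass (q a : ℝ) : ℝ := if a = 1 then q else 1 - q


lemma bernMass_nonneg {q : ℝ} (hq0 : 0 ≤ q) (hq1 : q ≤ 1) (a : ℝ) : 0 ≤ bernMass q a := by
  unfold bernMass; split <;> linarith

lemma integrable_of_bdd {Ω : Type*} [MeasurableSpace Ω] {μ : Measure Ω} [IsProbabilityMeasure μ]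
    {Z : Ω → ℝ} (hm : Measurable Z) {C : ℝ} (hb : ∀ ω, |Z ω| ≤ C) : Integrable Z μ :=
  Integrable.mono' (integrable_const C) hm.aestronglyMeasurable (Filter.Eventually.of_forall hb)

lemma integral_of_triple {Ω : Type*} [MeasurableSpace Ω] (μ : Measure Ω) [IsProbabilityMeasure μ]
    (X1 X2 X3 : Ω → ℝ)
    (hm1 : Measurable X1) (hm2 : Measurable X2) (hm3 : Measurable X3)
    (h1 : ∀ ω, X1 ω = 0 ∨ X1 ω = 1) (h2 : ∀ ω, X2 ω = 0 ∨ X2 ω = 1)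
    (h3 : ∀ ω, X3 ω = 0 ∨ X3 ω = 1)
    (q : ℝ) (hq0 : 0 ≤ q) (hq1 : q ≤ 1)
    (hj : ∀ a b c : ℝ, (a = 0 ∨ a = 1) → (b = 0 ∨ b = 1) → (c = 0 ∨ c = 1) →
      μ {ω | X1 ω = a ∧ X2 ω = b ∧ X3 ω = c} =
        ENNReal.ofReal (bernMass q a * bernMass q b * bernMass q c))
    (g : ℝ → ℝ → ℝ → ℝ) :
    ∫ ω, g (X1 ω) (X2 ω) (X3 ω) ∂μ =
      ∑ a ∈ ({0,1} : Finset ℝ), ∑ b ∈ ({0,1} : Finset ℝ), ∑ c ∈ ({0,1} : Finset ℝ),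
        g a b c * (bernMass q a * bernMass q b * bernMass q c) := by
  have hS : ∀ a b c : ℝ, MeasurableSet {ω | X1 ω = a ∧ X2 ω = b ∧ X3 ω = c} := by
    intro a b c
    exact (hm1 (measurableSet_singleton a)).inter
      ((hm2 (measurableSet_singleton b)).inter (hm3 (measurableSet_singleton c)))
  have key : ∀ ω, g (X1 ω) (X2 ω) (X3 ω) =
      ∑ a ∈ ({0,1} : Finset ℝ), ∑ b ∈ ({0,1} : Finset ℝ), ∑ c ∈ ({0,1} : Finset ℝ),
        Set.indicator {ω | X1 ω = a ∧ X2 ω = b ∧ X3 ω = c} (fun _ => g a b c) ω := by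
    intro ω
    rcases h1 ω with ha | ha <;> rcases h2 ω with hb | hb <;> rcases h3 ω with hc | hc <;>
      norm_num [Set.indicator_apply, ha, hb, hc]
  have hint : ∀ a b c : ℝ,
      Integrable (Set.indicator {ω | X1 ω = a ∧ X2 ω = b ∧ X3 ω = c} (fun _ => g a b c)) μ :=
    fun a b c => (integrable_const _).indicator (hS a b c)
  simp_rw [key]
  rw [integral_finset_sum _ fun a _ => integrable_finset_sum _ fun b _ =>
    integrable_finset_sum _ fun c _ => hint a b c]
  refine Finset.sum_congr rfl fun a ha => ?_
  rw [integral_finset_sum _ fun b _ => integrable_finset_sum _ fun c _ => hint a b c]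
  refine Finset.sum_congr rfl fun b hb => ?_
  rw [integral_finset_sum _ fun c _ => hint a b c]
  refine Finset.sum_congr rfl fun c hc => ?_
  have h01 : ∀ x : ℝ, x ∈ ({0,1} : Finset ℝ) → (x = 0 ∨ x = 1) := by
    intro x hx; simpa using hx
  rw [integral_indicator_const _ (hS a b c), measureReal_def, hj a b c (h01 a ha) (h01 b hb) (h01 c hc),
    ENNReal.toReal_ofReal (by
      have := bernMass_nonneg hq0 hq1
      exact mul_nonneg (mul_nonneg (this a) (this b)) (this c)),
    smul_eq_mul, mul_comm]

lemma bsum (q : ℝ) (g : ℝ → ℝ → ℝ → ℝ) :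
    ∑ a ∈ ({0,1} : Finset ℝ), ∑ b ∈ ({0,1} : Finset ℝ), ∑ c ∈ ({0,1} : Finset ℝ),
      g a b c * (bernMass q a * bernMass q b * bernMass q c)
    = g 0 0 0 * ((1-q)*(1-q)*(1-q)) + g 0 0 1 * ((1-q)*(1-q)*q)
      + g 0 1 0 * ((1-q)*q*(1-q)) + g 0 1 1 * ((1-q)*q*q)
      + g 1 0 0 * (q*(1-q)*(1-q)) + g 1 0 1 * (q*(1-q)*q)
      + g 1 1 0 * (q*q*(1-q)) + g 1 1 1 * (q*q*q) := by
  norm_num [bernMass]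
  ring

lemma integral_centered_sum_mul {Ω ι : Type*} [MeasurableSpace Ω] [Fintype ι]
    (μ : Measure Ω) [IsProbabilityMeasure μ]
    (F G : ι → Ω → ℝ)
    (hFm : ∀ i, Measurable (F i)) (hGm : ∀ i, Measurable (G i))
    (hFb : ∀ i ω, |F i ω| ≤ 1) (hGb : ∀ i ω, |G i ω| ≤ 1)
    (hind : ∀ i j, i ≠ j → IndepFun (F i) (G j) μ) :
    ∫ ω, (∑ i, (F i ω - ∫ x, F i x ∂μ)) * (∑ j, (G j ω - ∫ x, G j x ∂μ)) ∂μ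
      = ∑ i, ((∫ ω, F i ω * G i ω ∂μ) - (∫ x, F i x ∂μ) * (∫ x, G i x ∂μ)) := by
  have hFi : ∀ i, Integrable (F i) μ := fun i => integrable_of_bdd (hFm i) (hFb i)
  have hGi : ∀ i, Integrable (G i) μ := fun i => integrable_of_bdd (hGm i) (hGb i)
  have hFGm : ∀ i j, Measurable fun ω => (F i ω - ∫ x, F i x ∂μ) * (G j ω - ∫ x, G j x ∂μ) :=
    fun i j => ((hFm i).sub measurable_const).mul ((hGm j).sub measurable_const)
  have hFGi : ∀ i j, Integrable (fun ω => (F i ω - ∫ x, F i x ∂μ) * (G j ω - ∫ x, G j x ∂μ)) μ := by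
    intro i j
    refine integrable_of_bdd (hFGm i j)
      (C := (1 + |∫ x, F i x ∂μ|) * (1 + |∫ x, G j x ∂μ|)) fun ω => ?_
    rw [abs_mul]
    gcongr
    · calc |F i ω - ∫ x, F i x ∂μ| ≤ |F i ω| + |∫ x, F i x ∂μ| := abs_sub _ _
        _ ≤ 1 + |∫ x, F i x ∂μ| := by gcongr; exact hFb i ω
    · calc |G j ω - ∫ x, G j x ∂μ| ≤ |G j ω| + |∫ x, G j x ∂μ| := abs_sub _ _
        _ ≤ 1 + |∫ x, G j x ∂μ| := by gcongr; exact hGb j ω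
  have expand : ∀ ω, (∑ i, (F i ω - ∫ x, F i x ∂μ)) * (∑ j, (G j ω - ∫ x, G j x ∂μ))
      = ∑ i, ∑ j, (F i ω - ∫ x, F i x ∂μ) * (G j ω - ∫ x, G j x ∂μ) := fun ω => by
    rw [Finset.sum_mul_sum]
  simp_rw [expand]
  rw [integral_finset_sum _ fun i _ => integrable_finset_sum _ fun j _ => hFGi i j]
  refine Finset.sum_congr rfl fun i _ => ?_
  rw [integral_finset_sum _ fun j _ => hFGi i j]
  rw [Finset.sum_eq_single i]
  · -- diagonal term
    have hFG : Integrable (fun ω => F i ω * G i ω) μ := by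
      refine integrable_of_bdd ((hFm i).mul (hGm i)) (C := 1) fun ω => ?_
      rw [abs_mul]
      calc |F i ω| * |G i ω| ≤ 1 * 1 := by
            exact mul_le_mul (hFb i ω) (hGb i ω) (abs_nonneg _) zero_le_one
        _ = 1 := one_mul 1
    have heq : (fun ω => (F i ω - ∫ x, F i x ∂μ) * (G i ω - ∫ x, G i x ∂μ))
        = fun ω => F i ω * G i ω - ((∫ x, F i x ∂μ) * G i ω + (∫ x, G i x ∂μ) * F i ω
            - (∫ x, F i x ∂μ) * (∫ x, G i x ∂μ)) := by
      funext ω; ring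
    have h2 : Integrable (fun ω => (∫ x, F i x ∂μ) * G i ω) μ := (hGi i).const_mul _
    have h3 : Integrable (fun ω => (∫ x, G i x ∂μ) * F i ω) μ := (hFi i).const_mul _
    have h4 : Integrable (fun ω => (∫ x, F i x ∂μ) * G i ω + (∫ x, G i x ∂μ) * F i ω) μ :=
      h2.add h3
    have h5 : Integrable (fun ω => (∫ x, F i x ∂μ) * G i ω + (∫ x, G i x ∂μ) * F i ω
        - (∫ x, F i x ∂μ) * (∫ x, G i x ∂μ)) μ := h4.sub (integrable_const _)
    rw [heq, integral_sub hFG h5, integral_sub h4 (integrable_const _), integral_add h2 h3,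
      integral_const_mul, integral_const_mul, integral_const]
    simp only [measure_univ, probReal_univ, ENNReal.toReal_one, smul_eq_mul, one_mul]
    ring
  · intro j _ hji
    have hji' : i ≠ j := fun h => hji h.symm
    have hind' : IndepFun (fun ω => F i ω - ∫ x, F i x ∂μ) (fun ω => G j ω - ∫ x, G j x ∂μ) μ :=
      (hind i j hji').comp (measurable_id.sub_const _) (measurable_id.sub_const _)
    have hmul := hind'.integral_mul_eq_mul_integral ((hFm i).sub measurable_const).aestronglyMeasurable
      ((hGm j).sub measurable_const).aestronglyMeasurable
    have hz : ∫ ω, (F i ω - ∫ x, F i x ∂μ) ∂μ = 0 := by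
      rw [integral_sub (hFi i) (integrable_const _), integral_const]; simp
    calc ∫ ω, (F i ω - ∫ x, F i x ∂μ) * (G j ω - ∫ x, G j x ∂μ) ∂μ
        = integral μ ((fun ω => F i ω - ∫ x, F i x ∂μ) * (fun ω => G j ω - ∫ x, G j x ∂μ)) := rfl
      _ = 0 := by rw [hmul, hz, zero_mul]
  · intro h; exact absurd (Finset.mem_univ i) h

lemma card_pairs (p : ℕ) :
    ((univ.filter (fun q : Fin p × Fin p => q.1 < q.2)).card : ℝ) * 2
      = (p : ℝ) * ((p : ℝ) - 1) := by
  have h1 : (univ.filter (fun q : Fin p × Fin p => q.1 < q.2)).card = ∑ j : Fin p, (j : ℕ) := by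
    rw [Finset.card_filter, Fintype.sum_prod_type, Finset.sum_comm]
    refine Finset.sum_congr rfl fun j _ => ?_
    have h : ∑ i : Fin p, (if i < j then (1:ℕ) else 0)
        = (univ.filter (fun i : Fin p => i < j)).card := by
      rw [Finset.card_filter]
    rw [h]
    have h' : (univ.filter (fun i : Fin p => i < j)) = Finset.Iio j := by
      ext i; simp
    rw [h', Fin.card_Iio]
  have h2 : (∑ j : Fin p, (j : ℕ)) = ∑ k ∈ Finset.range p, k := by
    rw [Fin.sum_univ_eq_sum_range (fun k => k) p]
  have h3 := Finset.sum_range_id_mul_two p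
  rcases Nat.eq_zero_or_pos p with hp | hp
  · subst hp; simp [h1]
  · have h4 : ((univ.filter (fun q : Fin p × Fin p => q.1 < q.2)).card : ℕ) * 2 = p * (p - 1) := by
      rw [h1, h2, h3]
    have h5 := congrArg (Nat.cast : ℕ → ℝ) h4
    push_cast [Nat.cast_sub hp] at h5
    linarith

set_option maxHeartbeats 2000000 in
/-- Exact second-moment identities (Lemma 1, entries involving `û₃`): under the noisy
network model with three independent replicates, with `û₁ = N⁻¹ ∑_{i<j} Yᵢⱼ`,
`û₂ = (2N)⁻¹ ∑_{i<j} |Y*ᵢⱼ − Yᵢⱼ|`,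
`û₃ = (3N)⁻¹ ∑_{i<j} I(Y**ᵢⱼ − 2Y*ᵢⱼ + Yᵢⱼ ∈ {1,−2})`, `u_k = E(û_k)`,
`κ₁ = α(1−α)`, `κ₂ = β(1−β)`, one has
`N·E{(û₃−u₃)²} = δβκ₂(1/3−βκ₂) + (1−δ)κ₁(1−α){1/3−κ₁(1−α)}`,
`N·E{(û₁−u₁)(û₃−u₃)} = δκ₂(β²/3−2κ₂/3) + (1−δ)κ₁{(1−α)²/3−2κ₁/3}`, and
`N·E{(û₂−u₂)(û₃−u₃)} = δβκ₂(1/3−κ₂) + (1−δ)(1−α)κ₁(1/3−κ₁)`. -/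
theorem second_moment_identities_u3
    {Ω : Type*} [MeasurableSpace Ω] (μ : Measure Ω) [IsProbabilityMeasure μ]
    (p : ℕ) (hp : 2 ≤ p)
    (A : Fin p → Fin p → ℝ)
    (hA01 : ∀ i j, A i j = 0 ∨ A i j = 1)
    (hAsym : ∀ i j, A i j = A j i) (hAdiag : ∀ i, A i i = 0)
    (α β : ℝ) (hα0 : 0 ≤ α) (hα1 : α ≤ 1) (hβ0 : 0 ≤ β) (hβ1 : β ≤ 1)
    (hαβ : α + β ≤ 1)
    (Y Ystar Ystarstar : Fin p → Fin p → Ω → ℝ)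
    (hYmeas : ∀ i j, Measurable (Y i j)) (hYstarmeas : ∀ i j, Measurable (Ystar i j))
    (hYssmeas : ∀ i j, Measurable (Ystarstar i j))
    (hY01 : ∀ i j ω, Y i j ω = 0 ∨ Y i j ω = 1)
    (hYstar01 : ∀ i j ω, Ystar i j ω = 0 ∨ Ystar i j ω = 1)
    (hYss01 : ∀ i j ω, Ystarstar i j ω = 0 ∨ Ystarstar i j ω = 1)
    -- within each pair `i < j`, the three replicates are i.i.d. Bernoulli with
    -- success probability `1−β` if `Aᵢⱼ = 1` and `α` if `Aᵢⱼ = 0`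
    (hjoint : ∀ i j, i < j → ∀ a b c : ℝ,
      (a = 0 ∨ a = 1) → (b = 0 ∨ b = 1) → (c = 0 ∨ c = 1) →
      μ {ω | Y i j ω = a ∧ Ystar i j ω = b ∧ Ystarstar i j ω = c} =
        ENNReal.ofReal (bernMass (if A i j = 1 then 1 - β else α) a *
          bernMass (if A i j = 1 then 1 - β else α) b *
          bernMass (if A i j = 1 then 1 - β else α) c))
    -- the triples `(Yᵢⱼ, Y*ᵢⱼ, Y**ᵢⱼ)` are independent across unordered vertex pairs
    (hindep : iIndepFun (m := fun _ : EdgeIdx p => (inferInstance : MeasurableSpace (ℝ × ℝ × ℝ)))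
      (fun e ω => (Y e.1.1 e.1.2 ω, Ystar e.1.1 e.1.2 ω, Ystarstar e.1.1 e.1.2 ω)) μ)
    (N δ κ₁ κ₂ : ℝ)
    (hN : N = (p : ℝ) * ((p : ℝ) - 1) / 2)
    (hδ : δ = N⁻¹ * ∑ q ∈ univ.filter (fun q : Fin p × Fin p => q.1 < q.2), A q.1 q.2)
    (hκ₁ : κ₁ = α * (1 - α)) (hκ₂ : κ₂ = β * (1 - β))
    (uhat₁ uhat₂ uhat₃ : Ω → ℝ)
    (huhat₁ : ∀ ω, uhat₁ ω = N⁻¹ * ∑ q ∈ univ.filter (fun q : Fin p × Fin p => q.1 < q.2),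
      Y q.1 q.2 ω)
    (huhat₂ : ∀ ω, uhat₂ ω = (2 * N)⁻¹ *
      ∑ q ∈ univ.filter (fun q : Fin p × Fin p => q.1 < q.2),
        |Ystar q.1 q.2 ω - Y q.1 q.2 ω|)
    (huhat₃ : ∀ ω, uhat₃ ω = (3 * N)⁻¹ *
      ∑ q ∈ univ.filter (fun q : Fin p × Fin p => q.1 < q.2),
        (if Ystarstar q.1 q.2 ω - 2 * Ystar q.1 q.2 ω + Y q.1 q.2 ω = 1 ∨
            Ystarstar q.1 q.2 ω - 2 * Ystar q.1 q.2 ω + Y q.1 q.2 ω = -2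
          then (1 : ℝ) else 0))
    (u₁ u₂ u₃ : ℝ)
    (hu₁ : u₁ = ∫ ω, uhat₁ ω ∂μ) (hu₂ : u₂ = ∫ ω, uhat₂ ω ∂μ)
    (hu₃ : u₃ = ∫ ω, uhat₃ ω ∂μ) :
    N * ∫ ω, (uhat₃ ω - u₃) ^ 2 ∂μ
        = δ * β * κ₂ * (1 / 3 - β * κ₂) + (1 - δ) * κ₁ * (1 - α) * (1 / 3 - κ₁ * (1 - α)) ∧
    N * ∫ ω, (uhat₁ ω - u₁) * (uhat₃ ω - u₃) ∂μ
        = δ * κ₂ * (β ^ 2 / 3 - 2 * κ₂ / 3) + (1 - δ) * κ₁ * ((1 - α) ^ 2 / 3 - 2 * κ₁ / 3) ∧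
    N * ∫ ω, (uhat₂ ω - u₂) * (uhat₃ ω - u₃) ∂μ
        = δ * β * κ₂ * (1 / 3 - κ₂) + (1 - δ) * (1 - α) * κ₁ * (1 / 3 - κ₁) := by
  classical
  have hp2 : (2:ℝ) ≤ (p:ℝ) := by exact_mod_cast hp
  have hN0 : N ≠ 0 := by rw [hN]; nlinarith
  have habs01 : ∀ x : ℝ, x = 0 ∨ x = 1 → |x| ≤ 1 := by rintro x (rfl | rfl) <;> norm_num
  have hZ₂01 : ∀ i j (ω : Ω), |Ystar i j ω - Y i j ω| = 0 ∨ |Ystar i j ω - Y i j ω| = 1 := by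
    intro i j ω
    rcases hY01 i j ω with h1 | h1 <;> rcases hYstar01 i j ω with h2 | h2 <;>
      rw [h1, h2] <;> norm_num
  have hZ₃01 : ∀ i j (ω : Ω), (if Ystarstar i j ω - 2 * Ystar i j ω + Y i j ω = 1 ∨ Ystarstar i j ω - 2 * Ystar i j ω + Y i j ω = -2 then (1:ℝ) else 0) = 0 ∨ (if Ystarstar i j ω - 2 * Ystar i j ω + Y i j ω = 1 ∨ Ystarstar i j ω - 2 * Ystar i j ω + Y i j ω = -2 then (1:ℝ) else 0) = 1 := by
    intro i j ω; split <;> simp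
  have hZ₂m : ∀ i j, Measurable (fun ω => |Ystar i j ω - Y i j ω|) :=
    fun i j => ((hYstarmeas i j).sub (hYmeas i j)).abs
  have hZ₃m : ∀ i j, Measurable (fun ω => (if Ystarstar i j ω - 2 * Ystar i j ω + Y i j ω = 1 ∨ Ystarstar i j ω - 2 * Ystar i j ω + Y i j ω = -2 then (1:ℝ) else 0)) := by
    intro i j
    have hL : Measurable (fun ω => Ystarstar i j ω - 2 * Ystar i j ω + Y i j ω) :=
      ((hYssmeas i j).sub ((hYstarmeas i j).const_mul 2)).add (hYmeas i j)
    exact Measurable.ite ((hL (measurableSet_singleton 1)).union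
      (hL (measurableSet_singleton (-2)))) measurable_const measurable_const
  have hYint : ∀ i j, Integrable (Y i j) μ :=
    fun i j => integrable_of_bdd (hYmeas i j) (fun ω => habs01 _ (hY01 i j ω))
  have hZ₂int : ∀ i j, Integrable (fun ω => |Ystar i j ω - Y i j ω|) μ :=
    fun i j => integrable_of_bdd (hZ₂m i j) (fun ω => habs01 _ (hZ₂01 i j ω))
  have hZ₃int : ∀ i j, Integrable (fun ω => (if Ystarstar i j ω - 2 * Ystar i j ω + Y i j ω = 1 ∨ Ystarstar i j ω - 2 * Ystar i j ω + Y i j ω = -2 then (1:ℝ) else 0)) μ :=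
    fun i j => integrable_of_bdd (hZ₃m i j) (fun ω => habs01 _ (hZ₃01 i j ω))
  -- generic per-edge moment formula
  have hmom : ∀ (i j : Fin p), i < j → ∀ g : ℝ → ℝ → ℝ → ℝ, ∀ q : ℝ,
      q = (if A i j = 1 then 1 - β else α) →
      ∫ ω, g (Y i j ω) (Ystar i j ω) (Ystarstar i j ω) ∂μ =
        g 0 0 0 * ((1-q)*(1-q)*(1-q)) + g 0 0 1 * ((1-q)*(1-q)*q)
        + g 0 1 0 * ((1-q)*q*(1-q)) + g 0 1 1 * ((1-q)*q*q)
        + g 1 0 0 * (q*(1-q)*(1-q)) + g 1 0 1 * (q*(1-q)*q)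
        + g 1 1 0 * (q*q*(1-q)) + g 1 1 1 * (q*q*q) := by
    intro i j hij g q hq
    subst hq
    have hq0 : (0:ℝ) ≤ (if A i j = 1 then 1 - β else α) := by split <;> linarith
    have hq1 : (if A i j = 1 then 1 - β else α) ≤ 1 := by split <;> linarith
    rw [integral_of_triple μ _ _ _ (hYmeas i j) (hYstarmeas i j) (hYssmeas i j)
      (hY01 i j) (hYstar01 i j) (hYss01 i j) _ hq0 hq1 (hjoint i j hij) g, bsum]
  -- the six per-edge moments
  have hm1 : ∀ i j : Fin p, i < j →
      ∫ ω, Y i j ω ∂μ = (if A i j = 1 then 1 - β else α) := by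
    intro i j hij
    obtain ⟨q, hq⟩ : ∃ q, (if A i j = 1 then 1 - β else α) = q := ⟨_, rfl⟩
    rw [hq]
    have h := hmom i j hij (fun a _ _ => a) q hq.symm
    rw [h]; ring
  have hm2 : ∀ i j : Fin p, i < j →
      ∫ ω, |Ystar i j ω - Y i j ω| ∂μ = 2 * (if A i j = 1 then 1 - β else α)
        * (1 - (if A i j = 1 then 1 - β else α)) := by
    intro i j hij
    obtain ⟨q, hq⟩ : ∃ q, (if A i j = 1 then 1 - β else α) = q := ⟨_, rfl⟩
    rw [hq]
    have h := hmom i j hij (fun a b _ => |b - a|) q hq.symm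
    rw [h]; norm_num; ring
  have hm3 : ∀ i j : Fin p, i < j →
      ∫ ω, (if Ystarstar i j ω - 2 * Ystar i j ω + Y i j ω = 1 ∨ Ystarstar i j ω - 2 * Ystar i j ω + Y i j ω = -2 then (1:ℝ) else 0) ∂μ = 3 * (if A i j = 1 then 1 - β else α)
        * (1 - (if A i j = 1 then 1 - β else α))^2 := by
    intro i j hij
    obtain ⟨q, hq⟩ : ∃ q, (if A i j = 1 then 1 - β else α) = q := ⟨_, rfl⟩
    rw [hq]
    have h := hmom i j hij
      (fun a b c => if c - 2*b + a = 1 ∨ c - 2*b + a = -2 then (1:ℝ) else 0) q hq.symm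
    rw [h]; norm_num; ring
  have hp13 : ∀ i j : Fin p, i < j →
      ∫ ω, Y i j ω * (if Ystarstar i j ω - 2 * Ystar i j ω + Y i j ω = 1 ∨ Ystarstar i j ω - 2 * Ystar i j ω + Y i j ω = -2 then (1:ℝ) else 0) ∂μ = (if A i j = 1 then 1 - β else α)
        * (1 - (if A i j = 1 then 1 - β else α))^2 := by
    intro i j hij
    obtain ⟨q, hq⟩ : ∃ q, (if A i j = 1 then 1 - β else α) = q := ⟨_, rfl⟩
    rw [hq]
    have h := hmom i j hij
      (fun a b c => a * if c - 2*b + a = 1 ∨ c - 2*b + a = -2 then (1:ℝ) else 0) q hq.symm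
    rw [h]; norm_num; ring
  have hp23 : ∀ i j : Fin p, i < j →
      ∫ ω, |Ystar i j ω - Y i j ω| * (if Ystarstar i j ω - 2 * Ystar i j ω + Y i j ω = 1 ∨ Ystarstar i j ω - 2 * Ystar i j ω + Y i j ω = -2 then (1:ℝ) else 0) ∂μ
        = 2 * (if A i j = 1 then 1 - β else α)
          * (1 - (if A i j = 1 then 1 - β else α))^2 := by
    intro i j hij
    obtain ⟨q, hq⟩ : ∃ q, (if A i j = 1 then 1 - β else α) = q := ⟨_, rfl⟩
    rw [hq]
    have h := hmom i j hij
      (fun a b c => |b - a| * if c - 2*b + a = 1 ∨ c - 2*b + a = -2 then (1:ℝ) else 0) q hq.symm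
    rw [h]; norm_num; ring
  have hp33 : ∀ i j : Fin p, i < j →
      ∫ ω, (if Ystarstar i j ω - 2 * Ystar i j ω + Y i j ω = 1 ∨ Ystarstar i j ω - 2 * Ystar i j ω + Y i j ω = -2 then (1:ℝ) else 0) * (if Ystarstar i j ω - 2 * Ystar i j ω + Y i j ω = 1 ∨ Ystarstar i j ω - 2 * Ystar i j ω + Y i j ω = -2 then (1:ℝ) else 0) ∂μ
        = 3 * (if A i j = 1 then 1 - β else α)
          * (1 - (if A i j = 1 then 1 - β else α))^2 := by
    intro i j hij
    obtain ⟨q, hq⟩ : ∃ q, (if A i j = 1 then 1 - β else α) = q := ⟨_, rfl⟩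
    rw [hq]
    have h := hmom i j hij
      (fun a b c => (if c - 2*b + a = 1 ∨ c - 2*b + a = -2 then (1:ℝ) else 0)
        * if c - 2*b + a = 1 ∨ c - 2*b + a = -2 then (1:ℝ) else 0) q hq.symm
    rw [h]; norm_num; ring
  -- rewriting the estimators as sums over the subtype of edges
  have h1rw : ∀ ω, uhat₁ ω = N⁻¹ * ∑ e : EdgeIdx p, Y e.1.1 e.1.2 ω := by
    intro ω; rw [huhat₁ ω]; congr 1
    exact Finset.sum_subtype _ (by simp) _
  have h2rw : ∀ ω, uhat₂ ω = (2*N)⁻¹ * ∑ e : EdgeIdx p, |Ystar e.1.1 e.1.2 ω - Y e.1.1 e.1.2 ω| := by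
    intro ω; rw [huhat₂ ω]; congr 1
    exact Finset.sum_subtype _ (by simp) _
  have h3rw : ∀ ω, uhat₃ ω = (3*N)⁻¹ * ∑ e : EdgeIdx p, (if Ystarstar e.1.1 e.1.2 ω - 2 * Ystar e.1.1 e.1.2 ω + Y e.1.1 e.1.2 ω = 1 ∨ Ystarstar e.1.1 e.1.2 ω - 2 * Ystar e.1.1 e.1.2 ω + Y e.1.1 e.1.2 ω = -2 then (1:ℝ) else 0) := by
    intro ω; rw [huhat₃ ω]; congr 1
    exact Finset.sum_subtype _ (by simp) _
  have hu₁' : u₁ = N⁻¹ * ∑ e : EdgeIdx p, ∫ x, Y e.1.1 e.1.2 x ∂μ := by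
    rw [hu₁]; simp_rw [h1rw]
    rw [integral_const_mul, integral_finset_sum _ fun e _ => hYint e.1.1 e.1.2]
  have hu₂' : u₂ = (2*N)⁻¹ * ∑ e : EdgeIdx p, ∫ x, |Ystar e.1.1 e.1.2 x - Y e.1.1 e.1.2 x| ∂μ := by
    rw [hu₂]; simp_rw [h2rw]
    rw [integral_const_mul, integral_finset_sum _ fun e _ => hZ₂int e.1.1 e.1.2]
  have hu₃' : u₃ = (3*N)⁻¹ * ∑ e : EdgeIdx p, ∫ x, (if Ystarstar e.1.1 e.1.2 x - 2 * Ystar e.1.1 e.1.2 x + Y e.1.1 e.1.2 x = 1 ∨ Ystarstar e.1.1 e.1.2 x - 2 * Ystar e.1.1 e.1.2 x + Y e.1.1 e.1.2 x = -2 then (1:ℝ) else 0) ∂μ := by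
    rw [hu₃]; simp_rw [h3rw]
    rw [integral_const_mul, integral_finset_sum _ fun e _ => hZ₃int e.1.1 e.1.2]
  have hc₁ : ∀ ω, uhat₁ ω - u₁
      = N⁻¹ * ∑ e : EdgeIdx p, (Y e.1.1 e.1.2 ω - ∫ x, Y e.1.1 e.1.2 x ∂μ) := by
    intro ω; rw [h1rw ω, hu₁', ← mul_sub, ← Finset.sum_sub_distrib]
  have hc₂ : ∀ ω, uhat₂ ω - u₂
      = (2*N)⁻¹ * ∑ e : EdgeIdx p, (|Ystar e.1.1 e.1.2 ω - Y e.1.1 e.1.2 ω| - ∫ x, |Ystar e.1.1 e.1.2 x - Y e.1.1 e.1.2 x| ∂μ) := by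
    intro ω; rw [h2rw ω, hu₂', ← mul_sub, ← Finset.sum_sub_distrib]
  have hc₃ : ∀ ω, uhat₃ ω - u₃
      = (3*N)⁻¹ * ∑ e : EdgeIdx p, ((if Ystarstar e.1.1 e.1.2 ω - 2 * Ystar e.1.1 e.1.2 ω + Y e.1.1 e.1.2 ω = 1 ∨ Ystarstar e.1.1 e.1.2 ω - 2 * Ystar e.1.1 e.1.2 ω + Y e.1.1 e.1.2 ω = -2 then (1:ℝ) else 0) - ∫ x, (if Ystarstar e.1.1 e.1.2 x - 2 * Ystar e.1.1 e.1.2 x + Y e.1.1 e.1.2 x = 1 ∨ Ystarstar e.1.1 e.1.2 x - 2 * Ystar e.1.1 e.1.2 x + Y e.1.1 e.1.2 x = -2 then (1:ℝ) else 0) ∂μ) := by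
    intro ω; rw [h3rw ω, hu₃', ← mul_sub, ← Finset.sum_sub_distrib]
  -- measurability on ℝ³ and independence transfer
  have hg1v : Measurable (fun v : ℝ × ℝ × ℝ => v.1) := measurable_fst
  have hg2v : Measurable (fun v : ℝ × ℝ × ℝ => |v.2.1 - v.1|) :=
    ((measurable_fst.comp measurable_snd).sub measurable_fst).abs
  have hg3v : Measurable (fun v : ℝ × ℝ × ℝ =>
      if v.2.2 - 2 * v.2.1 + v.1 = 1 ∨ v.2.2 - 2 * v.2.1 + v.1 = -2 then (1:ℝ) else 0) := by
    have hL : Measurable (fun v : ℝ × ℝ × ℝ => v.2.2 - 2 * v.2.1 + v.1) :=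
      ((measurable_snd.comp measurable_snd).sub
        ((measurable_fst.comp measurable_snd).const_mul 2)).add measurable_fst
    exact Measurable.ite ((hL (measurableSet_singleton 1)).union
      (hL (measurableSet_singleton (-2)))) measurable_const measurable_const
  -- the three sums of covariances
  have hsplit : ∀ (h : EdgeIdx p → ℝ) (v₁ v₀ : ℝ),
      (∀ e : EdgeIdx p, h e = if A e.1.1 e.1.2 = 1 then v₁ else v₀) →
      ∑ e : EdgeIdx p, h e = δ * N * v₁ + (1 - δ) * N * v₀ := by
    intro h v₁ v₀ hh
    have hSA : ∑ e : EdgeIdx p, A e.1.1 e.1.2 = δ * N := by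
      have h1 : ∑ q ∈ univ.filter (fun q : Fin p × Fin p => q.1 < q.2), A q.1 q.2
          = ∑ e : EdgeIdx p, A e.1.1 e.1.2 := Finset.sum_subtype _ (by simp) _
      rw [hδ, h1]
      field_simp
    have hone : ∑ _e : EdgeIdx p, (1:ℝ) = N := by
      have h1 : ∑ q ∈ univ.filter (fun q : Fin p × Fin p => q.1 < q.2), (1:ℝ)
          = ∑ _e : EdgeIdx p, (1:ℝ) := Finset.sum_subtype _ (by simp) _
      have h2 := card_pairs p
      rw [← h1, Finset.sum_const, nsmul_eq_mul, mul_one, hN]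
      linarith
    calc ∑ e : EdgeIdx p, h e
        = ∑ e : EdgeIdx p, (A e.1.1 e.1.2 * v₁ + (1 - A e.1.1 e.1.2) * v₀) := by
          refine Finset.sum_congr rfl fun e _ => ?_
          rw [hh e]
          rcases hA01 e.1.1 e.1.2 with h0 | h0 <;> simp [h0]
      _ = (∑ e : EdgeIdx p, A e.1.1 e.1.2) * v₁
          + ((∑ _e : EdgeIdx p, (1:ℝ)) - ∑ e : EdgeIdx p, A e.1.1 e.1.2) * v₀ := by
          rw [Finset.sum_add_distrib, ← Finset.sum_mul, ← Finset.sum_mul,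
            Finset.sum_sub_distrib]
      _ = δ * N * v₁ + (1 - δ) * N * v₀ := by rw [hSA, hone]; ring
  refine ⟨?_, ?_, ?_⟩
  · -- (3,3)
    have hrw : ∀ ω, (uhat₃ ω - u₃) ^ 2
        = ((3*N)⁻¹ * (3*N)⁻¹) *
          ((∑ e : EdgeIdx p, ((if Ystarstar e.1.1 e.1.2 ω - 2 * Ystar e.1.1 e.1.2 ω + Y e.1.1 e.1.2 ω = 1 ∨ Ystarstar e.1.1 e.1.2 ω - 2 * Ystar e.1.1 e.1.2 ω + Y e.1.1 e.1.2 ω = -2 then (1:ℝ) else 0) - ∫ x, (if Ystarstar e.1.1 e.1.2 x - 2 * Ystar e.1.1 e.1.2 x + Y e.1.1 e.1.2 x = 1 ∨ Ystarstar e.1.1 e.1.2 x - 2 * Ystar e.1.1 e.1.2 x + Y e.1.1 e.1.2 x = -2 then (1:ℝ) else 0) ∂μ))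
            * (∑ e : EdgeIdx p, ((if Ystarstar e.1.1 e.1.2 ω - 2 * Ystar e.1.1 e.1.2 ω + Y e.1.1 e.1.2 ω = 1 ∨ Ystarstar e.1.1 e.1.2 ω - 2 * Ystar e.1.1 e.1.2 ω + Y e.1.1 e.1.2 ω = -2 then (1:ℝ) else 0) - ∫ x, (if Ystarstar e.1.1 e.1.2 x - 2 * Ystar e.1.1 e.1.2 x + Y e.1.1 e.1.2 x = 1 ∨ Ystarstar e.1.1 e.1.2 x - 2 * Ystar e.1.1 e.1.2 x + Y e.1.1 e.1.2 x = -2 then (1:ℝ) else 0) ∂μ))) := by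
      intro ω; rw [pow_two, hc₃ ω]; ring
    simp_rw [hrw]
    rw [integral_const_mul]
    have H := integral_centered_sum_mul μ
      (fun (e : EdgeIdx p) ω => (if Ystarstar e.1.1 e.1.2 ω - 2 * Ystar e.1.1 e.1.2 ω + Y e.1.1 e.1.2 ω = 1 ∨ Ystarstar e.1.1 e.1.2 ω - 2 * Ystar e.1.1 e.1.2 ω + Y e.1.1 e.1.2 ω = -2 then (1:ℝ) else 0)) (fun (e : EdgeIdx p) ω => (if Ystarstar e.1.1 e.1.2 ω - 2 * Ystar e.1.1 e.1.2 ω + Y e.1.1 e.1.2 ω = 1 ∨ Ystarstar e.1.1 e.1.2 ω - 2 * Ystar e.1.1 e.1.2 ω + Y e.1.1 e.1.2 ω = -2 then (1:ℝ) else 0))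
      (fun e => hZ₃m e.1.1 e.1.2) (fun e => hZ₃m e.1.1 e.1.2)
      (fun e ω => habs01 _ (hZ₃01 e.1.1 e.1.2 ω)) (fun e ω => habs01 _ (hZ₃01 e.1.1 e.1.2 ω))
      (fun e e' hne => (hindep.indepFun hne).comp hg3v hg3v)
    rw [H]
    have hval : ∀ e : EdgeIdx p,
        (∫ ω, (if Ystarstar e.1.1 e.1.2 ω - 2 * Ystar e.1.1 e.1.2 ω + Y e.1.1 e.1.2 ω = 1 ∨ Ystarstar e.1.1 e.1.2 ω - 2 * Ystar e.1.1 e.1.2 ω + Y e.1.1 e.1.2 ω = -2 then (1:ℝ) else 0) * (if Ystarstar e.1.1 e.1.2 ω - 2 * Ystar e.1.1 e.1.2 ω + Y e.1.1 e.1.2 ω = 1 ∨ Ystarstar e.1.1 e.1.2 ω - 2 * Ystar e.1.1 e.1.2 ω + Y e.1.1 e.1.2 ω = -2 then (1:ℝ) else 0) ∂μ)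
          - (∫ x, (if Ystarstar e.1.1 e.1.2 x - 2 * Ystar e.1.1 e.1.2 x + Y e.1.1 e.1.2 x = 1 ∨ Ystarstar e.1.1 e.1.2 x - 2 * Ystar e.1.1 e.1.2 x + Y e.1.1 e.1.2 x = -2 then (1:ℝ) else 0) ∂μ) * ∫ x, (if Ystarstar e.1.1 e.1.2 x - 2 * Ystar e.1.1 e.1.2 x + Y e.1.1 e.1.2 x = 1 ∨ Ystarstar e.1.1 e.1.2 x - 2 * Ystar e.1.1 e.1.2 x + Y e.1.1 e.1.2 x = -2 then (1:ℝ) else 0) ∂μ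
        = if A e.1.1 e.1.2 = 1 then (3*(1-β)*(1-(1-β))^2 - (3*(1-β)*(1-(1-β))^2) * (3*(1-β)*(1-(1-β))^2)) else (3*α*(1-α)^2 - (3*α*(1-α)^2) * (3*α*(1-α)^2)) := by
      intro e
      rw [hp33 e.1.1 e.1.2 e.2, hm3 e.1.1 e.1.2 e.2]
      rcases hA01 e.1.1 e.1.2 with h0 | h0 <;> simp [h0]
    rw [hsplit _ _ _ hval]
    rw [hκ₁, hκ₂]
    field_simp [hN0]
    ring
  · -- (1,3)
    have hrw : ∀ ω, (uhat₁ ω - u₁) * (uhat₃ ω - u₃)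
        = (N⁻¹ * (3*N)⁻¹) *
          ((∑ e : EdgeIdx p, (Y e.1.1 e.1.2 ω - ∫ x, Y e.1.1 e.1.2 x ∂μ))
            * (∑ e : EdgeIdx p, ((if Ystarstar e.1.1 e.1.2 ω - 2 * Ystar e.1.1 e.1.2 ω + Y e.1.1 e.1.2 ω = 1 ∨ Ystarstar e.1.1 e.1.2 ω - 2 * Ystar e.1.1 e.1.2 ω + Y e.1.1 e.1.2 ω = -2 then (1:ℝ) else 0) - ∫ x, (if Ystarstar e.1.1 e.1.2 x - 2 * Ystar e.1.1 e.1.2 x + Y e.1.1 e.1.2 x = 1 ∨ Ystarstar e.1.1 e.1.2 x - 2 * Ystar e.1.1 e.1.2 x + Y e.1.1 e.1.2 x = -2 then (1:ℝ) else 0) ∂μ))) := by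
      intro ω; rw [hc₁ ω, hc₃ ω]; ring
    simp_rw [hrw]
    rw [integral_const_mul]
    have H := integral_centered_sum_mul μ
      (fun (e : EdgeIdx p) ω => Y e.1.1 e.1.2 ω) (fun (e : EdgeIdx p) ω => (if Ystarstar e.1.1 e.1.2 ω - 2 * Ystar e.1.1 e.1.2 ω + Y e.1.1 e.1.2 ω = 1 ∨ Ystarstar e.1.1 e.1.2 ω - 2 * Ystar e.1.1 e.1.2 ω + Y e.1.1 e.1.2 ω = -2 then (1:ℝ) else 0))
      (fun e => hYmeas e.1.1 e.1.2) (fun e => hZ₃m e.1.1 e.1.2)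
      (fun e ω => habs01 _ (hY01 e.1.1 e.1.2 ω)) (fun e ω => habs01 _ (hZ₃01 e.1.1 e.1.2 ω))
      (fun e e' hne => (hindep.indepFun hne).comp hg1v hg3v)
    rw [H]
    have hval : ∀ e : EdgeIdx p,
        (∫ ω, Y e.1.1 e.1.2 ω * (if Ystarstar e.1.1 e.1.2 ω - 2 * Ystar e.1.1 e.1.2 ω + Y e.1.1 e.1.2 ω = 1 ∨ Ystarstar e.1.1 e.1.2 ω - 2 * Ystar e.1.1 e.1.2 ω + Y e.1.1 e.1.2 ω = -2 then (1:ℝ) else 0) ∂μ)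
          - (∫ x, Y e.1.1 e.1.2 x ∂μ) * ∫ x, (if Ystarstar e.1.1 e.1.2 x - 2 * Ystar e.1.1 e.1.2 x + Y e.1.1 e.1.2 x = 1 ∨ Ystarstar e.1.1 e.1.2 x - 2 * Ystar e.1.1 e.1.2 x + Y e.1.1 e.1.2 x = -2 then (1:ℝ) else 0) ∂μ
        = if A e.1.1 e.1.2 = 1 then ((1-β)*(1-(1-β))^2 - (1-β) * (3*(1-β)*(1-(1-β))^2)) else (α*(1-α)^2 - α * (3*α*(1-α)^2)) := by
      intro e
      rw [hp13 e.1.1 e.1.2 e.2, hm1 e.1.1 e.1.2 e.2, hm3 e.1.1 e.1.2 e.2]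
      rcases hA01 e.1.1 e.1.2 with h0 | h0 <;> simp [h0]
    rw [hsplit _ _ _ hval]
    rw [hκ₁, hκ₂]
    field_simp [hN0]
    ring
  · -- (2,3)
    have hrw : ∀ ω, (uhat₂ ω - u₂) * (uhat₃ ω - u₃)
        = ((2*N)⁻¹ * (3*N)⁻¹) *
          ((∑ e : EdgeIdx p, (|Ystar e.1.1 e.1.2 ω - Y e.1.1 e.1.2 ω| - ∫ x, |Ystar e.1.1 e.1.2 x - Y e.1.1 e.1.2 x| ∂μ))
            * (∑ e : EdgeIdx p, ((if Ystarstar e.1.1 e.1.2 ω - 2 * Ystar e.1.1 e.1.2 ω + Y e.1.1 e.1.2 ω = 1 ∨ Ystarstar e.1.1 e.1.2 ω - 2 * Ystar e.1.1 e.1.2 ω + Y e.1.1 e.1.2 ω = -2 then (1:ℝ) else 0) - ∫ x, (if Ystarstar e.1.1 e.1.2 x - 2 * Ystar e.1.1 e.1.2 x + Y e.1.1 e.1.2 x = 1 ∨ Ystarstar e.1.1 e.1.2 x - 2 * Ystar e.1.1 e.1.2 x + Y e.1.1 e.1.2 x = -2 then (1:ℝ) else 0) ∂μ))) := by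
      intro ω; rw [hc₂ ω, hc₃ ω]; ring
    simp_rw [hrw]
    rw [integral_const_mul]
    have H := integral_centered_sum_mul μ
      (fun (e : EdgeIdx p) ω => |Ystar e.1.1 e.1.2 ω - Y e.1.1 e.1.2 ω|) (fun (e : EdgeIdx p) ω => (if Ystarstar e.1.1 e.1.2 ω - 2 * Ystar e.1.1 e.1.2 ω + Y e.1.1 e.1.2 ω = 1 ∨ Ystarstar e.1.1 e.1.2 ω - 2 * Ystar e.1.1 e.1.2 ω + Y e.1.1 e.1.2 ω = -2 then (1:ℝ) else 0))
      (fun e => hZ₂m e.1.1 e.1.2) (fun e => hZ₃m e.1.1 e.1.2)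
      (fun e ω => habs01 _ (hZ₂01 e.1.1 e.1.2 ω)) (fun e ω => habs01 _ (hZ₃01 e.1.1 e.1.2 ω))
      (fun e e' hne => (hindep.indepFun hne).comp hg2v hg3v)
    rw [H]
    have hval : ∀ e : EdgeIdx p,
        (∫ ω, |Ystar e.1.1 e.1.2 ω - Y e.1.1 e.1.2 ω| * (if Ystarstar e.1.1 e.1.2 ω - 2 * Ystar e.1.1 e.1.2 ω + Y e.1.1 e.1.2 ω = 1 ∨ Ystarstar e.1.1 e.1.2 ω - 2 * Ystar e.1.1 e.1.2 ω + Y e.1.1 e.1.2 ω = -2 then (1:ℝ) else 0) ∂μ)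
          - (∫ x, |Ystar e.1.1 e.1.2 x - Y e.1.1 e.1.2 x| ∂μ) * ∫ x, (if Ystarstar e.1.1 e.1.2 x - 2 * Ystar e.1.1 e.1.2 x + Y e.1.1 e.1.2 x = 1 ∨ Ystarstar e.1.1 e.1.2 x - 2 * Ystar e.1.1 e.1.2 x + Y e.1.1 e.1.2 x = -2 then (1:ℝ) else 0) ∂μ
        = if A e.1.1 e.1.2 = 1 then (2*(1-β)*(1-(1-β))^2 - (2*(1-β)*(1-(1-β))) * (3*(1-β)*(1-(1-β))^2)) else (2*α*(1-α)^2 - (2*α*(1-α)) * (3*α*(1-α)^2)) := by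
      intro e
      rw [hp23 e.1.1 e.1.2 e.2, hm2 e.1.1 e.1.2 e.2, hm3 e.1.1 e.1.2 e.2]
      rcases hA01 e.1.1 e.1.2 with h0 | h0 <;> simp [h0]
    rw [hsplit _ _ _ hval]
    rw [hκ₁, hκ₂]
    field_simp [hN0]
    ring
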